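/- Let Π₀, Π₁, Π₂ be 2×2 Hermitian positive semidefinite complex matrices with Π₀ + Π₁ + Π₂ = I and rank Π_i ≤ 1 for each i. Then there exist x ∈ [0,1] and 2×2 unitary matrices U and W such that Π₂ = (1 − x)·W* diag(0,1) W, Π₀ = W* π₀ W, and Π₁ = W* π₁ W, where π₀ = [[|u₀₀|², √x·conj(u₀₀)·u₀₁], [√x·u₀₀·conj(u₀₁), x·|u₀₁|²]] and π₁ = [[|u₁₀|², √x·conj(u₁₀)·u₁₁], [√x·u₁₀·conj(u₁₁), x·|u₁₁|²]] with (u_{jk}) the entries of U. -/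

import Mathlib

open Matrix ComplexOrder

lemma aux_rank_one_decomp (P : Matrix (Fin 2) (Fin 2) ℂ) (hP : P.PosSemidef)
    (hr : P.rank ≤ 1) : ∃ v : Fin 2 → ℂ, P = Matrix.vecMulVec v (star v) := by
  have hH := hP.1
  have h10 : star (P 0 1) = P 1 0 := hH.apply 1 0
  have hdet : P.det = 0 := by
    by_contra hd
    have := P.rank_of_isUnit ((Matrix.isUnit_iff_isUnit_det P).mpr (isUnit_iff_ne_zero.mpr hd))
    rw [this] at hr; simp at hr
  rw [Matrix.det_fin_two, sub_eq_zero] at hdet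
  have h00 : 0 ≤ P 0 0 := by
    have h := hP.dotProduct_mulVec_nonneg (fun k => if k = 0 then 1 else 0)
    simpa [dotProduct, mulVec, Fin.sum_univ_two] using h
  have h11 : 0 ≤ P 1 1 := by
    have h := hP.dotProduct_mulVec_nonneg (fun k => if k = 1 then 1 else 0)
    simpa [dotProduct, mulVec, Fin.sum_univ_two] using h
  rw [Complex.nonneg_iff] at h00 h11
  by_cases hz : P 0 0 = 0
  · have h01 : P 0 1 = 0 := by
      have : P 0 1 * star (P 0 1) = 0 := by rw [h10, ← hdet, hz, zero_mul]
      simpa [Complex.mul_conj, Complex.normSq_eq_zero] using this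
    refine ⟨![0, (Real.sqrt (P 1 1).re : ℂ)], ?_⟩
    ext i j
    fin_cases i <;> fin_cases j <;>
      simp [vecMulVec_apply, hz, h01, ← h10, Complex.conj_ofReal]
    rw [← Complex.ofReal_mul, Real.mul_self_sqrt h11.1]
    exact Complex.ext (by simp) (by simp [← h11.2])
  · set t : ℝ := Real.sqrt (P 0 0).re with ht
    have htt : (t : ℂ) * (t : ℂ) = P 0 0 := by
      rw [← Complex.ofReal_mul, Real.mul_self_sqrt h00.1]
      exact Complex.ext (by simp) (by simp [← h00.2])
    have htne : (t : ℂ) ≠ 0 := by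
      intro h; rw [h, zero_mul] at htt; exact hz htt.symm
    refine ⟨![(t : ℂ), P 1 0 / (t : ℂ)], ?_⟩
    ext i j
    fin_cases i <;> fin_cases j <;>
      simp [vecMulVec_apply, Complex.conj_ofReal, star_div₀, ← h10]
    any_goals (rw [← htt])
    any_goals (field_simp; try (have h10' : (starRingEnd ℂ) (P 0 1) = P 1 0 := h10; linear_combination P 1 1 * htt + hdet - P 0 1 * h10'))

lemma aux_outer_conj (W : Matrix (Fin 2) (Fin 2) ℂ) (v : Fin 2 → ℂ) :
    W * Matrix.vecMulVec v (star v) * Wᴴ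
      = Matrix.vecMulVec (W *ᵥ v) (star (W *ᵥ v)) := by
  ext i j
  simp [Matrix.mul_apply, vecMulVec_apply, mulVec, dotProduct, Fin.sum_univ_two,
    Matrix.conjTranspose_apply]
  fin_cases i <;> fin_cases j <;> simp <;> ring

lemma aux_recover (W P Q : Matrix (Fin 2) (Fin 2) ℂ)
    (hW : W ∈ Matrix.unitaryGroup (Fin 2) ℂ) (h : W * P * Wᴴ = Q) :
    P = Wᴴ * Q * W := by
  have h1 : Wᴴ * W = 1 := by
    have := (Matrix.mem_unitaryGroup_iff').mp hW
    simpa [Matrix.star_eq_conjTranspose] using this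
  rw [← h]
  calc P = (Wᴴ * W) * P * (Wᴴ * W) := by rw [h1]; simp
    _ = Wᴴ * (W * P * Wᴴ) * W := by noncomm_ring

set_option maxHeartbeats 1000000 in
/-- **Arbitrary rank-one 3-element qubit POVM via the polarimeter.** Every 3-element
POVM `{P₀, P₁, P₂}` on a qubit with each element of rank at most one is realized by the
variational triangular polarimeter: a PPBS with vertical-polarization transmission `x`,
a unitary `U` on the transmission path, conjugated by an input unitary `W`. -/
theorem polarimeter_realizes_rank_one_povm
    (P₀ P₁ P₂ : Matrix (Fin 2) (Fin 2) ℂ)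
    (h0 : P₀.PosSemidef) (h1 : P₁.PosSemidef) (h2 : P₂.PosSemidef)
    (hsum : P₀ + P₁ + P₂ = 1)
    (hr0 : P₀.rank ≤ 1) (hr1 : P₁.rank ≤ 1) (hr2 : P₂.rank ≤ 1) :
    ∃ (x : ℝ) (U W : Matrix (Fin 2) (Fin 2) ℂ), 0 ≤ x ∧ x ≤ 1 ∧
      U ∈ Matrix.unitaryGroup (Fin 2) ℂ ∧ W ∈ Matrix.unitaryGroup (Fin 2) ℂ ∧
      P₂ = ((1 - x : ℝ) : ℂ) • (Wᴴ * !![0, 0; 0, 1] * W) ∧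
      P₀ = Wᴴ *
        !![star (U 0 0) * U 0 0, (Real.sqrt x : ℂ) * star (U 0 0) * U 0 1;
           (Real.sqrt x : ℂ) * U 0 0 * star (U 0 1), (x : ℂ) * (star (U 0 1) * U 0 1)] * W ∧
      P₁ = Wᴴ *
        !![star (U 1 0) * U 1 0, (Real.sqrt x : ℂ) * star (U 1 0) * U 1 1;
           (Real.sqrt x : ℂ) * U 1 0 * star (U 1 1), (x : ℂ) * (star (U 1 1) * U 1 1)] * W := by
  obtain ⟨va, hva⟩ := aux_rank_one_decomp P₀ h0 hr0
  obtain ⟨vb, hvb⟩ := aux_rank_one_decomp P₁ h1 hr1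
  obtain ⟨vc, hvc⟩ := aux_rank_one_decomp P₂ h2 hr2
  set r : ℝ := Complex.normSq (vc 0) + Complex.normSq (vc 1) with hrdef
  have hrC : (r : ℂ) = vc 0 * (starRingEnd ℂ) (vc 0) + vc 1 * (starRingEnd ℂ) (vc 1) := by
    rw [Complex.mul_conj, Complex.mul_conj, hrdef]
    push_cast; ring
  have hr_nonneg : 0 ≤ r := add_nonneg (Complex.normSq_nonneg _) (Complex.normSq_nonneg _)
  have hP01 : P₀ + P₁ = 1 - P₂ := by
    rw [← hsum]; abel
  -- r ≤ 1
  have hr_le : r ≤ 1 := by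
    have key := (h0.add h1).dotProduct_mulVec_nonneg vc
    have hq : star vc ⬝ᵥ ((P₀ + P₁) *ᵥ vc) = ((r - r ^ 2 : ℝ) : ℂ) := by
      push_cast
      rw [hP01, hvc, hrC]
      simp [Matrix.sub_mulVec, mulVec, dotProduct, Fin.sum_univ_two, vecMulVec_apply,
        Matrix.one_apply, Matrix.sub_apply, Complex.star_def]
      ring
    rw [hq, Complex.nonneg_iff] at key
    have h' : 0 ≤ r - r ^ 2 := by simpa [← Complex.ofReal_pow] using key.1
    nlinarith
  set x : ℝ := 1 - r with hxdef
  have hss : ((Real.sqrt r : ℝ) : ℂ) * ((Real.sqrt r : ℝ) : ℂ) = (r : ℂ) := by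
    rw [← Complex.ofReal_mul, Real.mul_self_sqrt hr_nonneg]
  -- the normalized vector w
  obtain ⟨w, hwnorm, hvcw⟩ : ∃ w : Fin 2 → ℂ,
      (w 0 * (starRingEnd ℂ) (w 0) + w 1 * (starRingEnd ℂ) (w 1) = 1) ∧
      vc = fun i => ((Real.sqrt r : ℝ) : ℂ) * w i := by
    by_cases hrz : r = 0
    · have hvc0 : vc 0 = 0 ∧ vc 1 = 0 := by
        constructor <;>
        · apply Complex.normSq_eq_zero.mp
          nlinarith [Complex.normSq_nonneg (vc 0), Complex.normSq_nonneg (vc 1)]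
      refine ⟨![0, 1], by simp, ?_⟩
      funext i; fin_cases i <;> simp [hvc0.1, hvc0.2, hrz]
    · have hsne : ((Real.sqrt r : ℝ) : ℂ) ≠ 0 := by
        simpa using (Real.sqrt_ne_zero hr_nonneg).mpr hrz
      refine ⟨fun i => vc i / ((Real.sqrt r : ℝ) : ℂ), ?_, ?_⟩
      · simp only [map_div₀, Complex.conj_ofReal]
        field_simp
        linear_combination -hrC - hss
      · funext i; field_simp
  -- the unitary W
  set W : Matrix (Fin 2) (Fin 2) ℂ := !![-(w 1), w 0; star (w 0), star (w 1)] with hWdef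
  have hWu : W ∈ Matrix.unitaryGroup (Fin 2) ℂ := by
    rw [Matrix.mem_unitaryGroup_iff, ← Matrix.ext_iff]
    simp only [Fin.forall_fin_two]
    simp [hWdef, Matrix.mul_apply, Fin.sum_univ_two, Matrix.star_eq_conjTranspose,
      Matrix.conjTranspose_apply, Matrix.one_apply, Complex.star_def]
    refine ⟨⟨by linear_combination hwnorm, by ring⟩, by ring, by linear_combination hwnorm⟩
  have hWvc : W *ᵥ vc = ![0, ((Real.sqrt r : ℝ) : ℂ)] := by
    rw [hvcw]
    refine funext ?_
    rw [Fin.forall_fin_two]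
    constructor <;>
      simp [hWdef, mulVec, dotProduct, Fin.sum_univ_two, Complex.star_def]
    · ring
    · linear_combination ((Real.sqrt r : ℝ) : ℂ) * hwnorm
  have hP2W : W * P₂ * Wᴴ = !![0, 0; 0, (r : ℂ)] := by
    rw [hvc, aux_outer_conj, hWvc, ← Matrix.ext_iff]
    simp only [Fin.forall_fin_two]
    simp [vecMulVec_apply, Complex.star_def, Complex.conj_ofReal]
    exact hss
  have hWH : W * Wᴴ = 1 := by
    have := (Matrix.mem_unitaryGroup_iff).mp hWu
    simpa [Matrix.star_eq_conjTranspose] using this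
  set a : Fin 2 → ℂ := W *ᵥ va with hadef
  set b : Fin 2 → ℂ := W *ᵥ vb with hbdef
  have hQ0 : W * P₀ * Wᴴ = vecMulVec a (star a) := by rw [hva, aux_outer_conj]
  have hQ1 : W * P₁ * Wᴴ = vecMulVec b (star b) := by rw [hvb, aux_outer_conj]
  have hE : vecMulVec a (star a) + vecMulVec b (star b) = 1 - !![0, 0; 0, (r : ℂ)] := by
    rw [← hQ0, ← hQ1, ← hP2W]
    have h' : W * P₀ * Wᴴ + W * P₁ * Wᴴ = W * (P₀ + P₁) * Wᴴ := by noncomm_ring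
    rw [h', hP01, Matrix.mul_sub, Matrix.mul_one, Matrix.sub_mul, hWH]
  have hE00 : a 0 * (starRingEnd ℂ) (a 0) + b 0 * (starRingEnd ℂ) (b 0) = 1 := by
    have := congrFun (congrFun hE 0) 0
    simpa [vecMulVec_apply, Complex.star_def, Matrix.one_apply, Matrix.sub_apply] using this
  have hE01 : a 0 * (starRingEnd ℂ) (a 1) + b 0 * (starRingEnd ℂ) (b 1) = 0 := by
    have := congrFun (congrFun hE 0) 1
    simpa [vecMulVec_apply, Complex.star_def, Matrix.one_apply, Matrix.sub_apply] using this
  have hE10 : a 1 * (starRingEnd ℂ) (a 0) + b 1 * (starRingEnd ℂ) (b 0) = 0 := by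
    have := congrFun (congrFun hE 1) 0
    simpa [vecMulVec_apply, Complex.star_def, Matrix.one_apply, Matrix.sub_apply] using this
  have hE11 : a 1 * (starRingEnd ℂ) (a 1) + b 1 * (starRingEnd ℂ) (b 1) = ((x : ℝ) : ℂ) := by
    have := congrFun (congrFun hE 1) 1
    simp only [vecMulVec_apply, Complex.star_def, Matrix.one_apply, Matrix.sub_apply,
      Pi.star_apply, Matrix.add_apply] at this
    rw [this]
    push_cast [hxdef]
    norm_num
  have hx0 : 0 ≤ x := by rw [hxdef]; linarith
  have hx1 : x ≤ 1 := by rw [hxdef]; linarith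
  have h2' : P₂ = Wᴴ * !![0, 0; 0, (r : ℂ)] * W := aux_recover W P₂ _ hWu hP2W
  have hrx : ((1 - x : ℝ) : ℂ) = (r : ℂ) := by push_cast [hxdef]; ring
  have hsmul : (!![0, 0; 0, (r : ℂ)]) = (r : ℂ) • !![0, 0; 0, 1] := by
    rw [← Matrix.ext_iff]
    simp only [Fin.forall_fin_two]
    simp
  have hP2goal : P₂ = ((1 - x : ℝ) : ℂ) • (Wᴴ * !![0, 0; 0, 1] * W) := by
    rw [h2', hrx, hsmul, Matrix.mul_smul, Matrix.smul_mul]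
  by_cases hxz : x = 0
  · -- x = 0 : the second components of a and b vanish
    have hz : a 1 = 0 ∧ b 1 = 0 := by
      rw [hxz] at hE11
      rw [Complex.mul_conj, Complex.mul_conj] at hE11
      norm_cast at hE11
      constructor <;> apply Complex.normSq_eq_zero.mp <;>
        nlinarith [Complex.normSq_nonneg (a 1), Complex.normSq_nonneg (b 1)]
    refine ⟨x, !![(starRingEnd ℂ) (a 0), -(b 0); (starRingEnd ℂ) (b 0), a 0], W,
      hx0, hx1, ?_, hWu, hP2goal, ?_, ?_⟩
    · rw [Matrix.mem_unitaryGroup_iff', Matrix.star_eq_conjTranspose, ← Matrix.ext_iff]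
      simp only [Fin.forall_fin_two]
      simp [Matrix.mul_apply, Fin.sum_univ_two, Matrix.conjTranspose_apply,
        Matrix.one_apply, Complex.star_def]
      refine ⟨⟨by linear_combination hE00, by ring⟩, by ring, by linear_combination hE00⟩
    · rw [aux_recover W P₀ _ hWu hQ0]
      congr 1
      congr 1
      rw [← Matrix.ext_iff]
      simp only [Fin.forall_fin_two]
      simp [vecMulVec_apply, Complex.star_def, hxz, hz.1]
    · rw [aux_recover W P₁ _ hWu hQ1]
      congr 1
      congr 1
      rw [← Matrix.ext_iff]
      simp only [Fin.forall_fin_two]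
      simp [vecMulVec_apply, Complex.star_def, hxz, hz.2]
  · -- x > 0
    have hsne : ((Real.sqrt x : ℝ) : ℂ) ≠ 0 := by
      simpa using (Real.sqrt_ne_zero hx0).mpr hxz
    have hss2 : ((Real.sqrt x : ℝ) : ℂ) * ((Real.sqrt x : ℝ) : ℂ) = ((x : ℝ) : ℂ) := by
      rw [← Complex.ofReal_mul, Real.mul_self_sqrt hx0]
    refine ⟨x, !![(starRingEnd ℂ) (a 0), (starRingEnd ℂ) (a 1) / ((Real.sqrt x : ℝ) : ℂ);
        (starRingEnd ℂ) (b 0), (starRingEnd ℂ) (b 1) / ((Real.sqrt x : ℝ) : ℂ)], W,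
      hx0, hx1, ?_, hWu, hP2goal, ?_, ?_⟩
    · rw [Matrix.mem_unitaryGroup_iff', Matrix.star_eq_conjTranspose, ← Matrix.ext_iff]
      simp only [Fin.forall_fin_two]
      simp [Matrix.mul_apply, Fin.sum_univ_two, Matrix.conjTranspose_apply,
        Matrix.one_apply, Complex.star_def, map_div₀, Complex.conj_ofReal]
      refine ⟨⟨by linear_combination hE00, ?_⟩, ?_, ?_⟩
      · field_simp
        linear_combination hE01
      · field_simp
        linear_combination hE10
      · field_simp
        linear_combination hE11 - hss2
    · rw [aux_recover W P₀ _ hWu hQ0]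
      congr 1
      congr 1
      rw [← Matrix.ext_iff]
      simp only [Fin.forall_fin_two]
      simp [vecMulVec_apply, Complex.star_def, map_div₀, Complex.conj_ofReal]
      refine ⟨by field_simp, by field_simp, ?_⟩
      field_simp
      linear_combination (a 1 * (starRingEnd ℂ) (a 1)) * hss2
    · rw [aux_recover W P₁ _ hWu hQ1]
      congr 1
      congr 1
      rw [← Matrix.ext_iff]
      simp only [Fin.forall_fin_two]
      simp [vecMulVec_apply, Complex.star_def, map_div₀, Complex.conj_ofReal]
      refine ⟨by field_simp, by field_simp, ?_⟩
      field_simp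
      linear_combination (b 1 * (starRingEnd ℂ) (b 1)) * hss2
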